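/- For every integer n ≥ 2, ∏_{p > p_n} (1 - 1/p²)^{-1} ≤ exp(2/p_n), where the product runs over all primes greater than the n-th prime p_n. -/

import Mathlib

open Finset Real Filter

/-- Dedekind psi function `Ψ(n) = n ∏_{p ∣ n} (1 + 1/p)`. -/
noncomputable def dedekindPsi (n : ℕ) : ℝ := n * ∏ p ∈ n.primeFactors, (1 + 1/(p:ℝ))

/-- `nthPrime n` is the n-th prime `p_n` (1-indexed: `nthPrime 1 = 2`). -/
noncomputable def nthPrime (n : ℕ) : ℕ := Nat.nth Nat.Prime (n - 1)

/-- `primorialN k = N_k`, the product of the first `k` primes. -/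
noncomputable def primorialN (k : ℕ) : ℕ := ∏ i ∈ Finset.range k, Nat.nth Nat.Prime i

lemma aux_factor {x : ℝ} (hx : 0 < x) (hx2 : x ≤ 1/2) :
    (1 - x)⁻¹ ≤ Real.exp (2 * x) := by
  have h1 : (0:ℝ) < 1 - x := by linarith
  have h2 : (1 - x)⁻¹ ≤ 1 + 2 * x := by
    rw [inv_eq_one_div, div_le_iff₀ h1]
    nlinarith
  have h3 := Real.add_one_le_exp (2 * x)
  linarith

theorem tail_prod_le (n : ℕ) (hn : 2 ≤ n) :
    (∏' p : {p : ℕ // p.Prime ∧ nthPrime n < p}, (1 - 1/((p : ℕ) : ℝ)^2)⁻¹)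
      ≤ Real.exp (2 / nthPrime n) := by
  set m := nthPrime n with hm
  have hmp : m.Prime := Nat.prime_nth_prime _
  have hm2 : 2 ≤ m := hmp.two_le
  have hm0 : (0:ℝ) < (m:ℝ) := by positivity
  set f : {p : ℕ // p.Prime ∧ m < p} → ℝ := fun p => (1 - 1/((p : ℕ) : ℝ)^2)⁻¹ with hf
  have key : ∀ s : Finset {p : ℕ // p.Prime ∧ m < p},
      ∏ i ∈ s, f i ≤ Real.exp (2 / m) := by
    intro s
    have hlarge : ∀ i : {p : ℕ // p.Prime ∧ m < p}, 3 ≤ ((i : ℕ) : ℝ) := by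
      intro i
      have : 3 ≤ (i : ℕ) := lt_of_le_of_lt hm2 i.2.2
      exact_mod_cast this
    have step1 : ∏ i ∈ s, f i ≤ ∏ i ∈ s, Real.exp (2 * (((i : ℕ) : ℝ)^2)⁻¹) := by
      apply Finset.prod_le_prod
      · intro i _
        have h3 := hlarge i
        have : 1/((i : ℕ) : ℝ)^2 < 1 := by
          rw [div_lt_one (by nlinarith)]
          nlinarith
        have h0 : (0:ℝ) ≤ 1 - 1/((i : ℕ) : ℝ)^2 := by linarith
        simp only [hf]
        exact inv_nonneg.mpr h0
      · intro i _
        have h3 := hlarge i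
        have hx : 0 < 1/((i : ℕ) : ℝ)^2 := by positivity
        have hx2 : 1/((i : ℕ) : ℝ)^2 ≤ 1/2 := by
          rw [div_le_div_iff₀ (by nlinarith) (by norm_num)]
          nlinarith
        have := aux_factor hx hx2
        show (1 - 1/((i : ℕ) : ℝ)^2)⁻¹ ≤ _
        rw [one_div]
        rw [one_div] at this
        exact this
    have step2 : ∏ i ∈ s, Real.exp (2 * (((i : ℕ) : ℝ)^2)⁻¹)
        = Real.exp (∑ i ∈ s, 2 * (((i : ℕ) : ℝ)^2)⁻¹) := (Real.exp_sum _ _).symm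
    have step3 : ∑ i ∈ s, 2 * (((i : ℕ) : ℝ)^2)⁻¹ ≤ 2 / m := by
      have hsum : ∑ i ∈ s, (((i : ℕ) : ℝ)^2)⁻¹ ≤ (m : ℝ)⁻¹ := by
        classical
        set T : Finset ℕ := s.image Subtype.val with hT
        have himg : ∑ k ∈ T, ((k : ℝ)^2)⁻¹ = ∑ i ∈ s, (((i : ℕ) : ℝ)^2)⁻¹ := by
          apply Finset.sum_image
          intro a _ b _ hab
          exact Subtype.ext hab
        rw [← himg]
        rcases T.eq_empty_or_nonempty with hTe | hTne
        · simp only [hTe, Finset.sum_empty]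
          positivity
        · set N := T.max' hTne with hN
          have hsub : T ⊆ Finset.Ioc m N := by
            intro k hk
            rw [Finset.mem_Ioc]
            constructor
            · obtain ⟨i, _, rfl⟩ := Finset.mem_image.mp hk
              exact i.2.2
            · exact T.le_max' k hk
          have hmN : m ≤ N := by
            obtain ⟨k, hk⟩ := hTne
            have h1 := (Finset.mem_Ioc.mp (hsub hk)).1
            have h2 := (Finset.mem_Ioc.mp (hsub hk)).2
            omega
          calc ∑ k ∈ T, ((k : ℝ)^2)⁻¹
              ≤ ∑ k ∈ Finset.Ioc m N, ((k : ℝ)^2)⁻¹ := by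
                apply Finset.sum_le_sum_of_subset_of_nonneg hsub
                intro k _ _; positivity
            _ ≤ (m : ℝ)⁻¹ - (N : ℝ)⁻¹ := sum_Ioc_inv_sq_le_sub (by omega) hmN
            _ ≤ (m : ℝ)⁻¹ := by
                have : (0:ℝ) ≤ (N : ℝ)⁻¹ := by positivity
                linarith
      calc ∑ i ∈ s, 2 * (((i : ℕ) : ℝ)^2)⁻¹
          = 2 * ∑ i ∈ s, (((i : ℕ) : ℝ)^2)⁻¹ := by rw [Finset.mul_sum]
        _ ≤ 2 * (m : ℝ)⁻¹ := by linarith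
        _ = 2 / m := by rw [div_eq_mul_inv]
    calc ∏ i ∈ s, f i ≤ Real.exp (∑ i ∈ s, 2 * (((i : ℕ) : ℝ)^2)⁻¹) := step2 ▸ step1
      _ ≤ Real.exp (2 / m) := Real.exp_le_exp.mpr step3
  by_cases hmul : Multipliable f
  · exact hasProd_le_of_prod_le hmul.hasProd key
  · rw [tprod_eq_one_of_not_multipliable hmul]
    exact Real.one_le_exp (by positivity)
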